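/- (From MGP distributions to exponent measures.) Let Z = (Z_1,…,Z_D) be a standard MGP random vector, Z_j = E + S_j, and assume the margins are balanced: 𝔼[exp(S_j)] = m for all j = 1,…,D, for some m ∈ (0,1]. Define the Borel measure Λ on ℝ^D by Λ(B) = (1/m) ∫_{−∞}^{∞} P(t·1 + S ∈ B) exp(−t) dt. Then: (a) Λ({x : x_j > 0}) = 1 for every j; (b) Λ(B + u·1) = exp(−u)·Λ(B) for every u ∈ ℝ and Borel B; (c) Λ(L) = 1/m, where L = {x ∈ ℝ^D : max_j x_j > 0}; (d) Λ(B) = Λ(L) · P(Z ∈ B) for every Borel set B ⊆ L. In particular Λ is an exponent measure on unit-exponential scale whose normalized restriction to L is the law of Z. -/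

import Mathlib

open MeasureTheory ProbabilityTheory Set
open scoped ENNReal

private lemma iSup_add_real {ι : Type*} [Nonempty ι] [Finite ι] (t : ℝ) (s : ι → ℝ) :
    (⨆ j, (t + s j)) = t + ⨆ j, s j := by
  apply le_antisymm
  · exact ciSup_le fun j => add_le_add_right (le_ciSup (Set.finite_range s).bddAbove j) t
  · have h : ∀ j, s j ≤ (⨆ j, (t + s j)) - t := fun j => by
      have := le_ciSup (Set.finite_range fun j => t + s j).bddAbove j
      linarith
    have := ciSup_le h
    linarith

private lemma lint_exp_Ioi (a : ℝ) :
    ∫⁻ t in Set.Ioi a, ENNReal.ofReal (Real.exp (-t)) = ENNReal.ofReal (Real.exp (-a)) := by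
  have hint : IntegrableOn (fun x : ℝ => Real.exp (-x)) (Set.Ioi a) := by
    simpa using exp_neg_integrableOn_Ioi a one_pos
  rw [← ofReal_integral_eq_lintegral_ofReal hint
    (Filter.Eventually.of_forall fun x => (Real.exp_pos _).le), integral_exp_neg_Ioi]

private lemma lint_exp_Ioc {a : ℝ} (ha : 0 ≤ a) :
    ∫⁻ t in Set.Ioc 0 a, ENNReal.ofReal (Real.exp (-t)) = ENNReal.ofReal (1 - Real.exp (-a)) := by
  have hint : IntegrableOn (fun x : ℝ => Real.exp (-x)) (Set.Ioc 0 a) := by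
    have : IntegrableOn (fun x : ℝ => Real.exp (-x)) (Set.Ioi 0) := by
      simpa using exp_neg_integrableOn_Ioi 0 one_pos
    exact this.mono_set Set.Ioc_subset_Ioi_self
  rw [← ofReal_integral_eq_lintegral_ofReal hint
    (Filter.Eventually.of_forall fun x => (Real.exp_pos _).le)]
  congr 1
  rw [← intervalIntegral.integral_of_le ha]
  rw [intervalIntegral.integral_comp_neg (fun x : ℝ => Real.exp x)]
  simp [integral_exp]

/-- The L-shaped region `L = {x ∈ ℝ^D : max_j x_j > 0}`. -/
def Lregion (D : ℕ) : Set (Fin D → ℝ) := {x | 0 < ⨆ j, x j}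

/-- From MGP distributions to exponent measures. Let `Z j = E + S j`
be a standard MGP vector with balanced margins `𝔼[exp (S j)] = m ∈ (0,1]` for all `j`,
and let `Λ` be the Borel measure on `ℝ^D` defined by
`Λ B = (1/m) ∫ P(t·1 + S ∈ B) exp (−t) dt`. Then (a) `Λ {x_j > 0} = 1` for all `j`;
(b) `Λ (B + u·1) = exp (−u) Λ B`; (c) `Λ L = 1/m`; (d) `Λ B = Λ L · P(Z ∈ B)` for
Borel `B ⊆ L`; and `Λ {max_j x_j > u} < ∞` for all real `u`. In particular `Λ` is an
exponent measure on unit-exponential scale whose normalized restriction to `L` is the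
law of `Z`. -/
theorem stmt_11
    {Ω : Type*} [MeasureSpace Ω] [IsProbabilityMeasure (ℙ : Measure Ω)]
    {D : ℕ} (hD : 0 < D)
    (E : Ω → ℝ) (S : Ω → Fin D → ℝ)
    (hEmeas : Measurable E) (hSmeas : Measurable S)
    (hEexp : ∀ t : ℝ, 0 ≤ t → ℙ {ω | t < E ω} = ENNReal.ofReal (Real.exp (-t)))
    (hindep : IndepFun E S ℙ)
    (hSle : ∀ j, ∀ᵐ ω ∂ℙ, S ω j ≤ 0)
    (hSmax : ∀ᵐ ω ∂ℙ, (⨆ j, S ω j) = 0)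
    (m : ℝ) (hm0 : 0 < m) (hm1 : m ≤ 1)
    (hmS : ∀ j, ∫ ω, Real.exp (S ω j) ∂ℙ = m)
    (Λ : Measure (Fin D → ℝ))
    (hΛ : ∀ B : Set (Fin D → ℝ), MeasurableSet B →
      Λ B = ENNReal.ofReal (1 / m)
        * ∫⁻ t : ℝ, ℙ {ω | (fun j => t + S ω j) ∈ B} * ENNReal.ofReal (Real.exp (-t))) :
    (∀ j, Λ {x | 0 < x j} = 1)
    ∧ (∀ (u : ℝ) (B : Set (Fin D → ℝ)), MeasurableSet B →
        Λ ((fun x : Fin D → ℝ => fun j => x j - u) ⁻¹' B)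
          = ENNReal.ofReal (Real.exp (-u)) * Λ B)
    ∧ Λ (Lregion D) = ENNReal.ofReal (1 / m)
    ∧ (∀ B : Set (Fin D → ℝ), MeasurableSet B → B ⊆ Lregion D →
        Λ B = Λ (Lregion D) * ℙ {ω | (fun j => E ω + S ω j) ∈ B})
    ∧ (∀ u : ℝ, Λ {x | u < ⨆ j, x j} < ⊤) := by
  haveI : Nonempty (Fin D) := ⟨⟨0, hD⟩⟩
  -- measurability of the shifted-membership events
  have hSj : ∀ j, Measurable fun ω => S ω j := fun j => (measurable_pi_apply j).comp hSmeas
  have hsetmeas : ∀ (t : ℝ) (B : Set (Fin D → ℝ)), MeasurableSet B →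
      MeasurableSet {ω | (fun j => t + S ω j) ∈ B} := by
    intro t B hB
    exact (measurable_pi_lambda _ fun j => measurable_const.add (hSj j)) hB
  have hinvm : (0:ℝ) ≤ 1 / m := by positivity
  -- (a)
  have ha : ∀ j, Λ {x | 0 < x j} = 1 := by
    intro j
    have hB : MeasurableSet {x : Fin D → ℝ | 0 < x j} :=
      measurableSet_lt measurable_const (measurable_pi_apply j)
    rw [hΛ _ hB]
    have hev : ∀ t : ℝ, {ω | (fun j' => t + S ω j') ∈ {x : Fin D → ℝ | 0 < x j}}
        = {ω | 0 < t + S ω j} := fun t => rfl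
    set F : ℝ × Ω → ℝ≥0∞ := fun p =>
      Set.indicator {p : ℝ × Ω | 0 < p.1 + S p.2 j} (fun p => ENNReal.ofReal (Real.exp (-p.1))) p
      with hF
    have hsetF : MeasurableSet {p : ℝ × Ω | 0 < p.1 + S p.2 j} := by
      have : Measurable fun p : ℝ × Ω => p.1 + S p.2 j :=
        measurable_fst.add ((hSj j).comp measurable_snd)
      exact this measurableSet_Ioi
    have hFmeas : Measurable F :=
      ((Real.measurable_exp.comp measurable_fst.neg).ennreal_ofReal).indicator hsetF
    have h1 : ∀ t : ℝ, ∫⁻ ω, F (t, ω) ∂ℙ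
        = ℙ {ω | 0 < t + S ω j} * ENNReal.ofReal (Real.exp (-t)) := by
      intro t
      have hs : MeasurableSet {ω : Ω | 0 < t + S ω j} :=
        (measurable_const.add (hSj j)) measurableSet_Ioi
      have : (fun ω => F (t, ω)) = Set.indicator {ω : Ω | 0 < t + S ω j}
          (fun _ => ENNReal.ofReal (Real.exp (-t))) := by
        ext ω
        by_cases h : 0 < t + S ω j <;> simp [hF, Set.indicator, h]
      rw [this, lintegral_indicator hs, setLIntegral_const, mul_comm]
    have h2 : ∀ ω : Ω, ∫⁻ t, F (t, ω) = ENNReal.ofReal (Real.exp (S ω j)) := by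
      intro ω
      have hseteq : {t : ℝ | 0 < t + S ω j} = Set.Ioi (-(S ω j)) := by
        ext t; simp only [Set.mem_setOf_eq, Set.mem_Ioi]; constructor <;> intro h <;> linarith
      have : (fun t => F (t, ω)) = Set.indicator (Set.Ioi (-(S ω j)))
          (fun t => ENNReal.ofReal (Real.exp (-t))) := by
        ext t
        by_cases h : 0 < t + S ω j <;>
          simp [hF, Set.indicator, h, Set.mem_Ioi, show (-(S ω j) < t ↔ 0 < t + S ω j) from
            ⟨fun h' => by linarith, fun h' => by linarith⟩]
      rw [this, lintegral_indicator measurableSet_Ioi, lint_exp_Ioi, neg_neg]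
    have hswap : ∫⁻ t, ∫⁻ ω, F (t, ω) ∂ℙ = ∫⁻ ω, ∫⁻ t, F (t, ω) ∂ℙ :=
      lintegral_lintegral_swap hFmeas.aemeasurable
    have h3 : ∫⁻ ω, ENNReal.ofReal (Real.exp (S ω j)) ∂ℙ = ENNReal.ofReal m := by
      have hint : Integrable (fun ω => Real.exp (S ω j)) ℙ := by
        refine ⟨(Real.measurable_exp.comp (hSj j)).aestronglyMeasurable, ?_⟩
        refine (hasFiniteIntegral_const (1:ℝ)).mono' ?_
        filter_upwards [hSle j] with ω hω
        rw [Real.norm_eq_abs, abs_of_pos (Real.exp_pos _)]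
        exact Real.exp_le_one_iff.mpr hω
      rw [← ofReal_integral_eq_lintegral_ofReal hint
        (Filter.Eventually.of_forall fun ω => (Real.exp_pos _).le), hmS j]
    calc ENNReal.ofReal (1 / m) * ∫⁻ t : ℝ,
          ℙ {ω | (fun j' => t + S ω j') ∈ {x : Fin D → ℝ | 0 < x j}}
            * ENNReal.ofReal (Real.exp (-t))
        = ENNReal.ofReal (1 / m) * ∫⁻ t : ℝ, ∫⁻ ω, F (t, ω) ∂ℙ := by
          congr 1; exact lintegral_congr fun t => by rw [hev, h1]
      _ = ENNReal.ofReal (1 / m) * ∫⁻ ω, ∫⁻ t, F (t, ω) ∂ℙ := by rw [hswap]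
      _ = ENNReal.ofReal (1 / m) * ENNReal.ofReal m := by
          rw [lintegral_congr fun ω => h2 ω, h3]
      _ = 1 := by
          rw [← ENNReal.ofReal_mul hinvm, one_div_mul_cancel hm0.ne', ENNReal.ofReal_one]
  -- (b)
  have hb : ∀ (u : ℝ) (B : Set (Fin D → ℝ)), MeasurableSet B →
      Λ ((fun x : Fin D → ℝ => fun j => x j - u) ⁻¹' B)
        = ENNReal.ofReal (Real.exp (-u)) * Λ B := by
    intro u B hB
    have hshift : Measurable (fun x : Fin D → ℝ => fun j => x j - u) :=
      measurable_pi_lambda _ fun j => (measurable_pi_apply j).sub measurable_const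
    rw [hΛ _ (hshift hB), hΛ _ hB]
    set g : ℝ → ℝ≥0∞ := fun t => ℙ {ω | (fun j => t + S ω j) ∈ B} with hg
    have key : ∀ t : ℝ, ℙ {ω | (fun j => t + S ω j) ∈
        ((fun x : Fin D → ℝ => fun j => x j - u) ⁻¹' B)} = g (t - u) := by
      intro t
      congr 1
      ext ω
      simp only [Set.mem_setOf_eq, Set.mem_preimage]
      rw [show (fun j => (t + S ω j) - u) = fun j => (t - u) + S ω j from
        funext fun j => by ring]
    calc ENNReal.ofReal (1 / m) * ∫⁻ t : ℝ, ℙ {ω | (fun j => t + S ω j) ∈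
          ((fun x : Fin D → ℝ => fun j => x j - u) ⁻¹' B)} * ENNReal.ofReal (Real.exp (-t))
        = ENNReal.ofReal (1 / m) * ∫⁻ t : ℝ,
            ENNReal.ofReal (Real.exp (-u)) * (g (t - u) * ENNReal.ofReal (Real.exp (-(t - u)))) := by
          congr 1
          refine lintegral_congr fun t => ?_
          rw [key t, show Real.exp (-t) = Real.exp (-(t-u)) * Real.exp (-u) by
            rw [← Real.exp_add]; ring_nf, ENNReal.ofReal_mul (Real.exp_pos _).le]
          ring
      _ = ENNReal.ofReal (1 / m) * (ENNReal.ofReal (Real.exp (-u)) *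
            ∫⁻ t : ℝ, g (t - u) * ENNReal.ofReal (Real.exp (-(t - u)))) := by
          rw [lintegral_const_mul' _ _ ENNReal.ofReal_ne_top]
      _ = ENNReal.ofReal (1 / m) * (ENNReal.ofReal (Real.exp (-u)) *
            ∫⁻ t : ℝ, g t * ENNReal.ofReal (Real.exp (-t))) := by
          rw [lintegral_sub_right_eq_self (fun t => g t * ENNReal.ofReal (Real.exp (-t))) u]
      _ = ENNReal.ofReal (Real.exp (-u)) * (ENNReal.ofReal (1 / m) *
            ∫⁻ t : ℝ, g t * ENNReal.ofReal (Real.exp (-t))) := by ring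
  -- measurability of Lregion
  have hLunion : Lregion D = ⋃ j, {x : Fin D → ℝ | 0 < x j} := by
    ext x
    simp only [Lregion, Set.mem_setOf_eq, Set.mem_iUnion]
    exact lt_ciSup_iff (Set.finite_range _).bddAbove
  have hL : MeasurableSet (Lregion D) := by
    rw [hLunion]
    exact MeasurableSet.iUnion fun j =>
      measurableSet_lt measurable_const (measurable_pi_apply j)
  -- (c)
  have hc : Λ (Lregion D) = ENNReal.ofReal (1 / m) := by
    rw [hΛ _ hL]
    have hpt : ∀ t : ℝ, ℙ {ω | (fun j => t + S ω j) ∈ Lregion D}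
        * ENNReal.ofReal (Real.exp (-t))
        = Set.indicator (Set.Ioi (0:ℝ)) (fun t => ENNReal.ofReal (Real.exp (-t))) t := by
      intro t
      by_cases ht : 0 < t
      · have h1 : ℙ {ω | (fun j => t + S ω j) ∈ Lregion D} = 1 := by
          rw [← measure_univ (μ := (ℙ : Measure Ω))]
          apply measure_congr
          rw [Filter.eventuallyEq_set]
          filter_upwards [hSmax] with ω hω
          simp only [Set.mem_setOf_eq, Set.mem_univ, iff_true, Lregion]
          rw [iSup_add_real t (S ω), hω, add_zero]
          exact ht
        rw [h1, one_mul, Set.indicator_of_mem (Set.mem_Ioi.mpr ht)]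
      · have h0 : ℙ {ω | (fun j => t + S ω j) ∈ Lregion D} = 0 := by
          rw [measure_eq_zero_iff_ae_notMem]
          filter_upwards [hSmax] with ω hω
          simp only [Set.mem_setOf_eq, Lregion]
          rw [iSup_add_real t (S ω), hω, add_zero]
          exact ht
        rw [h0, zero_mul, Set.indicator_of_notMem (by simpa using ht)]
    rw [lintegral_congr hpt, lintegral_indicator measurableSet_Ioi, lint_exp_Ioi]
    simp
  -- (d)
  have hd : ∀ B : Set (Fin D → ℝ), MeasurableSet B → B ⊆ Lregion D →
      Λ B = Λ (Lregion D) * ℙ {ω | (fun j => E ω + S ω j) ∈ B} := by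
    intro B hB hBL
    set f : ℝ → ℝ≥0∞ := fun t => Set.indicator (Set.Ioi (0:ℝ))
      (fun t => ENNReal.ofReal (Real.exp (-t))) t with hf
    have hfmeas : Measurable f :=
      (Real.measurable_exp.comp measurable_neg).ennreal_ofReal.indicator measurableSet_Ioi
    set μ₀ : Measure ℝ := volume.withDensity f with hμ₀
    haveI : IsFiniteMeasure μ₀ := by
      constructor
      rw [hμ₀, withDensity_apply _ MeasurableSet.univ, Measure.restrict_univ, hf,
        lintegral_indicator measurableSet_Ioi, lint_exp_Ioi]
      exact ENNReal.ofReal_lt_top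
    haveI : IsProbabilityMeasure (Measure.map E ℙ) :=
      Measure.isProbabilityMeasure_map hEmeas.aemeasurable
    have hE0 : ℙ {ω | (0:ℝ) < E ω} = 1 := by simpa using hEexp 0 le_rfl
    have hEdist : Measure.map E ℙ = μ₀ := by
      apply Measure.ext_of_Iic
      intro a
      rw [Measure.map_apply hEmeas measurableSet_Iic]
      by_cases ha : 0 ≤ a
      · have hmeasIoi : MeasurableSet {ω | a < E ω} := hEmeas measurableSet_Ioi
        have hcompl : E ⁻¹' Set.Iic a = {ω | a < E ω}ᶜ := by
          ext ω; simp [Set.mem_Iic, not_lt]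
        have hPle : ℙ (E ⁻¹' Set.Iic a) = 1 - ENNReal.ofReal (Real.exp (-a)) := by
          rw [hcompl, measure_compl hmeasIoi (measure_ne_top _ _), measure_univ, hEexp a ha]
        have hRHS : μ₀ (Set.Iic a) = ENNReal.ofReal (1 - Real.exp (-a)) := by
          rw [hμ₀, withDensity_apply _ measurableSet_Iic, hf,
            lintegral_indicator measurableSet_Ioi,
            Measure.restrict_restrict measurableSet_Ioi, Set.Ioi_inter_Iic]
          exact lint_exp_Ioc ha
        rw [hPle, hRHS, ENNReal.ofReal_sub _ (Real.exp_pos _).le, ENNReal.ofReal_one]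
      · push_neg at ha
        have hLHS : ℙ (E ⁻¹' Set.Iic a) = 0 := by
          have hsub : E ⁻¹' Set.Iic a ⊆ {ω | (0:ℝ) < E ω}ᶜ := by
            intro ω hω
            simp only [Set.mem_preimage, Set.mem_Iic] at hω
            simp only [Set.mem_compl_iff, Set.mem_setOf_eq, not_lt]
            linarith
          refine measure_mono_null hsub ?_
          have hm : MeasurableSet {ω | (0:ℝ) < E ω} := hEmeas measurableSet_Ioi
          rw [measure_compl hm (measure_ne_top _ _), measure_univ, hE0]
          simp
        have hRHS : μ₀ (Set.Iic a) = 0 := by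
          rw [hμ₀, withDensity_apply _ measurableSet_Iic, hf,
            lintegral_indicator measurableSet_Ioi,
            Measure.restrict_restrict measurableSet_Ioi, Set.Ioi_inter_Iic,
            Set.Ioc_eq_empty (by linarith), Measure.restrict_empty, lintegral_zero_measure]
        rw [hLHS, hRHS]
    set ν : Measure (Fin D → ℝ) := Measure.map S ℙ with hν
    have hC : MeasurableSet {p : ℝ × (Fin D → ℝ) | (fun j => p.1 + p.2 j) ∈ B} := by
      have : Measurable (fun p : ℝ × (Fin D → ℝ) => fun j => p.1 + p.2 j) :=
        measurable_pi_lambda _ fun j =>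
          measurable_fst.add ((measurable_pi_apply j).comp measurable_snd)
      exact this hB
    have hpair : Measurable fun ω => (E ω, S ω) := hEmeas.prodMk hSmeas
    have hprod : Measure.map (fun ω => (E ω, S ω)) ℙ = (Measure.map E ℙ).prod ν :=
      (indepFun_iff_map_prod_eq_prod_map_map hEmeas.aemeasurable hSmeas.aemeasurable).mp hindep
    have hZ : ℙ {ω | (fun j => E ω + S ω j) ∈ B}
        = ∫⁻ t, ℙ {ω | (fun j => t + S ω j) ∈ B} ∂(Measure.map E ℙ) := by
      have h1 : {ω | (fun j => E ω + S ω j) ∈ B}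
          = (fun ω => (E ω, S ω)) ⁻¹' {p : ℝ × (Fin D → ℝ) | (fun j => p.1 + p.2 j) ∈ B} := rfl
      rw [h1, ← Measure.map_apply hpair hC, hprod, Measure.prod_apply hC]
      refine lintegral_congr fun t => ?_
      have hslice : MeasurableSet
          (Prod.mk t ⁻¹' {p : ℝ × (Fin D → ℝ) | (fun j => p.1 + p.2 j) ∈ B}) :=
        (measurable_pi_lambda _ fun j => measurable_const.add (measurable_pi_apply j)) hB
      rw [hν, Measure.map_apply hSmeas hslice]
      rfl
    have hgmeas : Measurable fun t : ℝ => ℙ {ω | (fun j => t + S ω j) ∈ B} := by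
      have hC' : MeasurableSet {p : ℝ × Ω | (fun j => p.1 + S p.2 j) ∈ B} := by
        have : Measurable (fun p : ℝ × Ω => fun j => p.1 + S p.2 j) :=
          measurable_pi_lambda _ fun j => measurable_fst.add ((hSj j).comp measurable_snd)
        exact this hB
      exact measurable_measure_prodMk_left hC'
    have hg0 : ∀ t : ℝ, t ≤ 0 → ℙ {ω | (fun j => t + S ω j) ∈ B} = 0 := by
      intro t ht
      rw [measure_eq_zero_iff_ae_notMem]
      filter_upwards [hSmax] with ω hω hmem
      have hL' := hBL hmem
      simp only [Lregion, Set.mem_setOf_eq] at hL'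
      rw [iSup_add_real t (S ω), hω, add_zero] at hL'
      linarith
    have hZ2 : ℙ {ω | (fun j => E ω + S ω j) ∈ B}
        = ∫⁻ t, ℙ {ω | (fun j => t + S ω j) ∈ B} * ENNReal.ofReal (Real.exp (-t)) := by
      rw [hZ, hEdist, hμ₀, lintegral_withDensity_eq_lintegral_mul _ hfmeas hgmeas]
      refine lintegral_congr fun t => ?_
      by_cases ht : 0 < t
      · simp only [Pi.mul_apply]
        rw [show f t = ENNReal.ofReal (Real.exp (-t)) from
          Set.indicator_of_mem (Set.mem_Ioi.mpr ht) _, mul_comm]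
      · simp only [Pi.mul_apply]
        rw [hg0 t (not_lt.mp ht), mul_zero, zero_mul]
    rw [hΛ _ hB, hc, hZ2]
  -- (e)
  have he : ∀ u : ℝ, Λ {x | u < ⨆ j, x j} < ⊤ := by
    intro u
    have hsets : {x : Fin D → ℝ | u < ⨆ j, x j}
        = (fun x : Fin D → ℝ => fun j => x j - u) ⁻¹' (Lregion D) := by
      ext x
      simp only [Set.mem_setOf_eq, Set.mem_preimage, Lregion]
      rw [show (fun j => x j - u) = fun j => -u + x j from funext fun j => by ring,
        iSup_add_real (-u) x]
      constructor <;> intro h <;> linarith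
    rw [hsets, hb u (Lregion D) hL, hc]
    exact ENNReal.mul_lt_top ENNReal.ofReal_lt_top ENNReal.ofReal_lt_top
  exact ⟨ha, hb, hc, hd, he⟩
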